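/- The Laplace transform E[e^{-σV}] of the limiting finite Voronoï cell volume distribution satisfies E[e^{-σV}] → 1 as σ → 0⁺ and has the expansion E[e^{-σV}] = 1 - (665√3/1024)σ^{1/4} + (49/(768√3))σ^{3/4} + (63/80)σ + O(σ^{5/4}). -/

import Mathlib

open Real Filter Asymptotics

noncomputable def Ppoly (r : ℝ) : ℝ :=
  96 * (-252 - 399 * Real.sqrt 3 * r - 756 * r ^ 2 - 161 * Real.sqrt 3 * r ^ 3
    + 170 * r ^ 4 + 153 * Real.sqrt 3 * r ^ 5 + 144 * r ^ 6 + 22 * Real.sqrt 3 * r ^ 7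
    + 4 * r ^ 8)

noncomputable def P1poly (r γ : ℝ) : ℝ :=
  126 * (168 + 85 * γ) + 63 * Real.sqrt 3 * r * (867 + 596 * γ)
    + 1323 * r ^ 2 * (132 + 95 * γ) + 28 * Real.sqrt 3 * r ^ 3 * (3153 + 2300 * γ)
    + 24 * r ^ 4 * (2463 + 1843 * γ) + Real.sqrt 3 * r ^ 5 * (588 + 905 * γ)
    - 36 * r ^ 6 * (177 + 124 * γ) - 6 * Real.sqrt 3 * r ^ 7 * (174 + 127 * γ)
    - 36 * r ^ 8 * (4 + 3 * γ)

noncomputable def P2poly (r γ : ℝ) : ℝ :=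
  -8 * (63 * (24 + 17 * γ) + 63 * Real.sqrt 3 * r * (105 + 74 * γ)
    + 378 * r ^ 2 * (78 + 55 * γ) + 14 * Real.sqrt 3 * r ^ 3 * (1569 + 1108 * γ)
    + 12 * r ^ 4 * (2337 + 1652 * γ) + Real.sqrt 3 * r ^ 5 * (6954 + 4919 * γ)
    + 18 * r ^ 6 * (154 + 109 * γ) + 6 * Real.sqrt 3 * r ^ 7 * (24 + 17 * γ))

noncomputable def P3poly (r γ : ℝ) : ℝ :=
  126 * (24 + 17 * γ) + 63 * Real.sqrt 3 * r * (277 + 196 * γ)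
    + 189 * r ^ 2 * (516 + 365 * γ) + 28 * Real.sqrt 3 * r ^ 3 * (3399 + 2404 * γ)
    + 24 * r ^ 4 * (7193 + 5087 * γ) + Real.sqrt 3 * r ^ 5 * (68436 + 48397 * γ)
    + 36 * r ^ 6 * (1465 + 1036 * γ) + 6 * Real.sqrt 3 * r ^ 7 * (1342 + 949 * γ)
    + 12 * r ^ 8 * (140 + 99 * γ)

noncomputable def Qpoly (r : ℝ) : ℝ := 1 + Real.sqrt 3 * r + r ^ 2

/-- The Laplace transform E[e^{-σV}] of the finite Voronoï cell volume law,
formula (3.14), with r = σ^{1/4}. -/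
noncomputable def Elaplace (σ : ℝ) : ℝ :=
  let r := σ ^ ((1 : ℝ) / 4)
  (3 / 2) * (Ppoly r +
      (P1poly r (Real.sqrt 2) * Real.exp (Real.sqrt 6 * r)
        + P1poly r (-Real.sqrt 2) * Real.exp (-(Real.sqrt 6 * r)))
      + (P2poly r (Real.sqrt 2) * Real.exp (2 * Real.sqrt 6 * r)
        + P2poly r (-Real.sqrt 2) * Real.exp (-(2 * Real.sqrt 6 * r)))
      + (P3poly r (Real.sqrt 2) * Real.exp (3 * Real.sqrt 6 * r)
        + P3poly r (-Real.sqrt 2) * Real.exp (-(3 * Real.sqrt 6 * r)))) /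
    (Qpoly r * (4 + (4 + 3 * Real.sqrt 2) * Real.exp (Real.sqrt 6 * r)
        + (4 - 3 * Real.sqrt 2) * Real.exp (-(Real.sqrt 6 * r))) - 12) ^ 4


noncomputable def Spoly (r : ℝ) : ℝ := (1 : ℝ) + (1 : ℝ) * Real.sqrt 2 * Real.sqrt 3 * r + (3 : ℝ) * r ^ 2 + (1 : ℝ) * Real.sqrt 2 * Real.sqrt 3 * r ^ 3 + ((3 : ℝ)/2) * r ^ 4 + ((3 : ℝ)/10) * Real.sqrt 2 * Real.sqrt 3 * r ^ 5 + ((3 : ℝ)/10) * r ^ 6 + ((3 : ℝ)/70) * Real.sqrt 2 * Real.sqrt 3 * r ^ 7 + ((9 : ℝ)/280) * r ^ 8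

noncomputable def Smoly (r : ℝ) : ℝ := (1 : ℝ) + (-1 : ℝ) * Real.sqrt 2 * Real.sqrt 3 * r + (3 : ℝ) * r ^ 2 + (-1 : ℝ) * Real.sqrt 2 * Real.sqrt 3 * r ^ 3 + ((3 : ℝ)/2) * r ^ 4 + ((-3 : ℝ)/10) * Real.sqrt 2 * Real.sqrt 3 * r ^ 5 + ((3 : ℝ)/10) * r ^ 6 + ((-3 : ℝ)/70) * Real.sqrt 2 * Real.sqrt 3 * r ^ 7 + ((9 : ℝ)/280) * r ^ 8

noncomputable def D0sqP (r : ℝ) : ℝ := (1728 : ℝ) * r ^ 2 + (3456 : ℝ) * Real.sqrt 3 * r ^ 3 + (12096 : ℝ) * r ^ 4 + (10368 : ℝ) * Real.sqrt 3 * r ^ 5 + ((106272 : ℝ)/5) * r ^ 6 + (12096 : ℝ) * Real.sqrt 3 * r ^ 7 + ((619488 : ℝ)/35) * r ^ 8 + ((263664 : ℝ)/35) * Real.sqrt 3 * r ^ 9 + ((212652 : ℝ)/25) * r ^ 10 + ((499752 : ℝ)/175) * Real.sqrt 3 * r ^ 11 + ((451116 : ℝ)/175) * r ^ 12 + ((121788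 : ℝ)/175) * Real.sqrt 3 * r ^ 13 + ((617112 : ℝ)/1225) * r ^ 14 + ((18864 : ℝ)/175) * Real.sqrt 3 * r ^ 15 + ((74421 : ℝ)/1225) * r ^ 16 + ((12042 : ℝ)/1225) * Real.sqrt 3 * r ^ 17 + ((4833 : ℝ)/1225) * r ^ 18 + ((486 : ℝ)/1225) * Real.sqrt 3 * r ^ 19 + ((81 : ℝ)/1225) * r ^ 20

noncomputable def Tpoly (r : ℝ) : ℝ := (-780759 : ℝ) * Real.sqrt 3 + ((-1908037944 : ℝ)/175) * r + ((-17943984837 : ℝ)/700) * Real.sqrt 3 * r ^ 2 + ((-21612395457 : ℝ)/175) * r ^ 3 + ((-213618850317 : ℝ)/1400) * Real.sqrt 3 * r ^ 4 + ((-32440731093 : ℝ)/70) * r ^ 5 + ((-2796974200647 : ℝ)/7000) * Real.sqrt 3 * r ^ 6 + ((-22124775165291 : ℝ)/24500) * r ^ 7 + ((-237313163358387 : ℝ)/392000) * Real.sqrt 3 * r ^ 8 + ((-107619227937351 : ℝ)/98000) * r ^ 9 + ((-237200177053737 : ℝ)/392000) * Real.sqrt 3 * r ^ 10 + ((-450254764245717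 : ℝ)/490000) * r ^ 11 + ((-1685630732307777 : ℝ)/3920000) * Real.sqrt 3 * r ^ 12 + ((-961979509195461 : ℝ)/1715000) * r ^ 13 + ((-6243283115356023 : ℝ)/27440000) * Real.sqrt 3 * r ^ 14 + ((-4443469951034151 : ℝ)/17150000) * r ^ 15 + ((-50628978861475167 : ℝ)/548800000) * Real.sqrt 3 * r ^ 16 + ((-2540944981713627 : ℝ)/27440000) * r ^ 17 + ((-1999513694733327 : ℝ)/68600000) * Real.sqrt 3 * r ^ 18 + ((-1244189572539939 : ℝ)/48020000) * r ^ 19 + ((-141662498858703 : ℝ)/19600000) * Real.sqrt 3 * r ^ 20 + ((-2733187507622973 : ℝ)/480200000) * r ^ 21 + ((-1348865465878359 : ℝ)/960400000) * Real.sqrt 3 * r ^ 22 + ((-937066787631333 : ℝ)/960400000) * r ^ 23 + ((-1625166375209379 : ℝ)/7683200000) * Real.sqrt 3 * r ^ 24 + ((-281771749521 : ℝ)/2195200) * r ^ 25 + ((-92650334095107 : ℝ)/3841600000) * Real.sqrt 3 * r ^ 26 + ((-107639323983 : ℝ)/8575000) * r ^ 27 + ((-15326546578641 : ℝ)/7683200000)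 * Real.sqrt 3 * r ^ 28 + ((-41375298231 : ℝ)/48020000) * r ^ 29 + ((-85035543687 : ℝ)/768320000) * Real.sqrt 3 * r ^ 30 + ((-71447810859 : ℝ)/1920800000) * r ^ 31 + ((-109988847 : ℝ)/31360000) * Real.sqrt 3 * r ^ 32 + ((-53924859 : ℝ)/68600000) * r ^ 33 + ((-11362923 : ℝ)/274400000) * Real.sqrt 3 * r ^ 34 + ((-59049 : ℝ)/17150000) * r ^ 35

noncomputable def ApolyE (r : ℝ) : ℝ :=
  1 + ((-665 : ℝ)/1024) * Real.sqrt 3 * r + ((49 : ℝ)/2304) * Real.sqrt 3 * r ^ 3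
    + ((63 : ℝ)/80) * r ^ 4

noncomputable def NfunE (r : ℝ) : ℝ :=
  Ppoly r +
      (P1poly r (Real.sqrt 2) * Real.exp (Real.sqrt 6 * r)
        + P1poly r (-Real.sqrt 2) * Real.exp (-(Real.sqrt 6 * r)))
      + (P2poly r (Real.sqrt 2) * Real.exp (2 * Real.sqrt 6 * r)
        + P2poly r (-Real.sqrt 2) * Real.exp (-(2 * Real.sqrt 6 * r)))
      + (P3poly r (Real.sqrt 2) * Real.exp (3 * Real.sqrt 6 * r)
        + P3poly r (-Real.sqrt 2) * Real.exp (-(3 * Real.sqrt 6 * r)))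

noncomputable def dfunE (r : ℝ) : ℝ :=
  Qpoly r * (4 + (4 + 3 * Real.sqrt 2) * Real.exp (Real.sqrt 6 * r)
        + (4 - 3 * Real.sqrt 2) * Real.exp (-(Real.sqrt 6 * r))) - 12

noncomputable def N0E (r : ℝ) : ℝ :=
  Ppoly r + (P1poly r (Real.sqrt 2) * Spoly r + P1poly r (-Real.sqrt 2) * Smoly r)
    + (P2poly r (Real.sqrt 2) * Spoly r ^ 2 + P2poly r (-Real.sqrt 2) * Smoly r ^ 2)
    + (P3poly r (Real.sqrt 2) * Spoly r ^ 3 + P3poly r (-Real.sqrt 2) * Smoly r ^ 3)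

noncomputable def D0E (r : ℝ) : ℝ :=
  Qpoly r * (4 + (4 + 3 * Real.sqrt 2) * Spoly r + (4 - 3 * Real.sqrt 2) * Smoly r) - 12

noncomputable def aE (r : ℝ) : ℝ := Real.exp (Real.sqrt 6 * r) - Spoly r

noncomputable def bE (r : ℝ) : ℝ := Real.exp (-(Real.sqrt 6 * r)) - Smoly r

noncomputable def UnE (r : ℝ) : ℝ :=
  P1poly r (Real.sqrt 2)
    + P2poly r (Real.sqrt 2) * (Real.exp (Real.sqrt 6 * r) + Spoly r)
    + P3poly r (Real.sqrt 2) * (Real.exp (Real.sqrt 6 * r) ^ 2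
        + Real.exp (Real.sqrt 6 * r) * Spoly r + Spoly r ^ 2)

noncomputable def VnE (r : ℝ) : ℝ :=
  P1poly r (-Real.sqrt 2)
    + P2poly r (-Real.sqrt 2) * (Real.exp (-(Real.sqrt 6 * r)) + Smoly r)
    + P3poly r (-Real.sqrt 2) * (Real.exp (-(Real.sqrt 6 * r)) ^ 2
        + Real.exp (-(Real.sqrt 6 * r)) * Smoly r + Smoly r ^ 2)

noncomputable def KE (r : ℝ) : ℝ :=
  dfunE r ^ 3 + dfunE r ^ 2 * D0E r + dfunE r * D0E r ^ 2 + D0E r ^ 3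

noncomputable def U1E (r : ℝ) : ℝ :=
  3 / 2 * UnE r - ApolyE r * (Qpoly r * (4 + 3 * Real.sqrt 2)) * KE r

noncomputable def V1E (r : ℝ) : ℝ :=
  3 / 2 * VnE r - ApolyE r * (Qpoly r * (4 - 3 * Real.sqrt 2)) * KE r

lemma sqrt6_eq : Real.sqrt 6 = Real.sqrt 2 * Real.sqrt 3 := by
  rw [show (6 : ℝ) = 2 * 3 by norm_num, Real.sqrt_mul (by norm_num : (0:ℝ) ≤ 2)]

lemma sqrt2_sq : Real.sqrt 2 ^ 2 = 2 := Real.sq_sqrt (by norm_num)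
lemma sqrt3_sq : Real.sqrt 3 ^ 2 = 3 := Real.sq_sqrt (by norm_num)

lemma Spoly_sum (r : ℝ) :
    Spoly r = ∑ m ∈ Finset.range 9, (Real.sqrt 6 * r) ^ m / m.factorial := by
  rw [sqrt6_eq]
  simp only [Finset.sum_range_succ, Finset.sum_range_zero, Nat.factorial]
  push_cast
  unfold Spoly
  linear_combination (((-1 : ℝ)/2) * Real.sqrt 3 ^ 2 * r ^ 2 + ((-1 : ℝ)/6) * Real.sqrt 2 * Real.sqrt 3 ^ 3 * r ^ 3 + ((-1 : ℝ)/12) * Real.sqrt 3 ^ 4 * r ^ 4 + ((-1 : ℝ)/24) * Real.sqrt 2 ^ 2 * Real.sqrt 3 ^ 4 * r ^ 4 + ((-1 : ℝ)/60) * Real.sqrt 2 * Real.sqrt 3 ^ 5 * r ^ 5 + ((-1 : ℝ)/120) * Real.sqrt 2 ^ 3 * Real.sqrt 3 ^ 5 * r ^ 5 + ((-1 : ℝ)/180) * Real.sqrt 3 ^ 6 * r ^ 6 + ((-1 : ℝ)/360) * Real.sqrt 2 ^ 2 * Real.sqrt 3 ^ 6 * r ^ 6 + ((-1 : ℝ)/720)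 * Real.sqrt 2 ^ 4 * Real.sqrt 3 ^ 6 * r ^ 6 + ((-1 : ℝ)/1260) * Real.sqrt 2 * Real.sqrt 3 ^ 7 * r ^ 7 + ((-1 : ℝ)/2520) * Real.sqrt 2 ^ 3 * Real.sqrt 3 ^ 7 * r ^ 7 + ((-1 : ℝ)/5040) * Real.sqrt 2 ^ 5 * Real.sqrt 3 ^ 7 * r ^ 7 + ((-1 : ℝ)/5040) * Real.sqrt 3 ^ 8 * r ^ 8 + ((-1 : ℝ)/10080) * Real.sqrt 2 ^ 2 * Real.sqrt 3 ^ 8 * r ^ 8 + ((-1 : ℝ)/20160) * Real.sqrt 2 ^ 4 * Real.sqrt 3 ^ 8 * r ^ 8 + ((-1 : ℝ)/40320) * Real.sqrt 2 ^ 6 * Real.sqrt 3 ^ 8 * r ^ 8) * sqrt2_sq + ((-1 : ℝ) * r ^ 2 + ((-1 : ℝ)/3) * Real.sqrt 2 * Real.sqrt 3 * r ^ 3 + ((-1 : ℝ)/2) * r ^ 4 + ((-1 : ℝ)/6) * Real.sqrt 3 ^ 2 * r ^ 4 + ((-1 : ℝ)/10) * Real.sqrt 2 * Real.sqrt 3 *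 r ^ 5 + ((-1 : ℝ)/30) * Real.sqrt 2 * Real.sqrt 3 ^ 3 * r ^ 5 + ((-1 : ℝ)/10) * r ^ 6 + ((-1 : ℝ)/30) * Real.sqrt 3 ^ 2 * r ^ 6 + ((-1 : ℝ)/90) * Real.sqrt 3 ^ 4 * r ^ 6 + ((-1 : ℝ)/70) * Real.sqrt 2 * Real.sqrt 3 * r ^ 7 + ((-1 : ℝ)/210) * Real.sqrt 2 * Real.sqrt 3 ^ 3 * r ^ 7 + ((-1 : ℝ)/630) * Real.sqrt 2 * Real.sqrt 3 ^ 5 * r ^ 7 + ((-3 : ℝ)/280) * r ^ 8 + ((-1 : ℝ)/280) * Real.sqrt 3 ^ 2 * r ^ 8 + ((-1 : ℝ)/840) * Real.sqrt 3 ^ 4 * r ^ 8 + ((-1 : ℝ)/2520) * Real.sqrt 3 ^ 6 * r ^ 8) * sqrt3_sq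

lemma Smoly_sum (r : ℝ) :
    Smoly r = ∑ m ∈ Finset.range 9, (-(Real.sqrt 6 * r)) ^ m / m.factorial := by
  rw [sqrt6_eq]
  simp only [Finset.sum_range_succ, Finset.sum_range_zero, Nat.factorial]
  push_cast
  unfold Smoly
  linear_combination (((-1 : ℝ)/2) * Real.sqrt 3 ^ 2 * r ^ 2 + ((1 : ℝ)/6) * Real.sqrt 2 * Real.sqrt 3 ^ 3 * r ^ 3 + ((-1 : ℝ)/12) * Real.sqrt 3 ^ 4 * r ^ 4 + ((-1 : ℝ)/24) * Real.sqrt 2 ^ 2 * Real.sqrt 3 ^ 4 * r ^ 4 + ((1 : ℝ)/60) * Real.sqrt 2 * Real.sqrt 3 ^ 5 * r ^ 5 + ((1 : ℝ)/120) * Real.sqrt 2 ^ 3 * Real.sqrt 3 ^ 5 * r ^ 5 + ((-1 : ℝ)/180) * Real.sqrt 3 ^ 6 * r ^ 6 + ((-1 : ℝ)/360) * Real.sqrt 2 ^ 2 * Real.sqrt 3 ^ 6 * r ^ 6 + ((-1 : ℝ)/720) * Real.sqrt 2 ^ 4 * Real.sqrt 3 ^ 6 * r ^ 6 + ((1 :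 ℝ)/1260) * Real.sqrt 2 * Real.sqrt 3 ^ 7 * r ^ 7 + ((1 : ℝ)/2520) * Real.sqrt 2 ^ 3 * Real.sqrt 3 ^ 7 * r ^ 7 + ((1 : ℝ)/5040) * Real.sqrt 2 ^ 5 * Real.sqrt 3 ^ 7 * r ^ 7 + ((-1 : ℝ)/5040) * Real.sqrt 3 ^ 8 * r ^ 8 + ((-1 : ℝ)/10080) * Real.sqrt 2 ^ 2 * Real.sqrt 3 ^ 8 * r ^ 8 + ((-1 : ℝ)/20160) * Real.sqrt 2 ^ 4 * Real.sqrt 3 ^ 8 * r ^ 8 + ((-1 : ℝ)/40320) * Real.sqrt 2 ^ 6 * Real.sqrt 3 ^ 8 * r ^ 8) * sqrt2_sq + ((-1 : ℝ) * r ^ 2 + ((1 : ℝ)/3) * Real.sqrt 2 * Real.sqrt 3 * r ^ 3 + ((-1 : ℝ)/2) * r ^ 4 + ((-1 : ℝ)/6) * Real.sqrt 3 ^ 2 * r ^ 4 + ((1 : ℝ)/10) * Real.sqrt 2 * Real.sqrt 3 * r ^ 5 + ((1 : ℝ)/30) * Real.sqrt 2 * Real.sqrt 3 ^ 3 * r ^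 5 + ((-1 : ℝ)/10) * r ^ 6 + ((-1 : ℝ)/30) * Real.sqrt 3 ^ 2 * r ^ 6 + ((-1 : ℝ)/90) * Real.sqrt 3 ^ 4 * r ^ 6 + ((1 : ℝ)/70) * Real.sqrt 2 * Real.sqrt 3 * r ^ 7 + ((1 : ℝ)/210) * Real.sqrt 2 * Real.sqrt 3 ^ 3 * r ^ 7 + ((1 : ℝ)/630) * Real.sqrt 2 * Real.sqrt 3 ^ 5 * r ^ 7 + ((-3 : ℝ)/280) * r ^ 8 + ((-1 : ℝ)/280) * Real.sqrt 3 ^ 2 * r ^ 8 + ((-1 : ℝ)/840) * Real.sqrt 3 ^ 4 * r ^ 8 + ((-1 : ℝ)/2520) * Real.sqrt 3 ^ 6 * r ^ 8) * sqrt3_sq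

lemma D0sq_id (r : ℝ) : D0E r ^ 2 = D0sqP r := by
  unfold D0E D0sqP Spoly Smoly Qpoly
  linear_combination ((216 : ℝ) * Real.sqrt 3 ^ 2 * r ^ 2 + (36 : ℝ) * Real.sqrt 2 ^ 2 * Real.sqrt 3 ^ 2 * r ^ 2 + (432 : ℝ) * Real.sqrt 3 * r ^ 3 + (288 : ℝ) * Real.sqrt 3 ^ 3 * r ^ 3 + (72 : ℝ) * Real.sqrt 2 ^ 2 * Real.sqrt 3 ^ 3 * r ^ 3 + (1296 : ℝ) * Real.sqrt 3 ^ 2 * r ^ 4 + (72 : ℝ) * Real.sqrt 3 ^ 4 * r ^ 4 + (144 : ℝ) * Real.sqrt 2 ^ 2 * Real.sqrt 3 ^ 2 * r ^ 4 + (36 : ℝ) * Real.sqrt 2 ^ 2 * Real.sqrt 3 ^ 4 * r ^ 4 + (1296 : ℝ) * Real.sqrt 3 * r ^ 5 + (864 : ℝ) * Real.sqrt 3 ^ 3 * r ^ 5 + (216 : ℝ) * Real.sqrt 2 ^ 2 * Real.sqrt 3 ^ 3 * r ^ 5 + ((11232 : ℝ)/5) * Real.sqrt 3 ^ 2 * r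 ^ 6 + (144 : ℝ) * Real.sqrt 3 ^ 4 * r ^ 6 + ((1188 : ℝ)/5) * Real.sqrt 2 ^ 2 * Real.sqrt 3 ^ 2 * r ^ 6 + (72 : ℝ) * Real.sqrt 2 ^ 2 * Real.sqrt 3 ^ 4 * r ^ 6 + ((7992 : ℝ)/5) * Real.sqrt 3 * r ^ 7 + ((4968 : ℝ)/5) * Real.sqrt 3 ^ 3 * r ^ 7 + ((1296 : ℝ)/5) * Real.sqrt 2 ^ 2 * Real.sqrt 3 ^ 3 * r ^ 7 + ((66456 : ℝ)/35) * Real.sqrt 3 ^ 2 * r ^ 8 + ((576 : ℝ)/5) * Real.sqrt 3 ^ 4 * r ^ 8 + ((7416 : ℝ)/35) * Real.sqrt 2 ^ 2 * Real.sqrt 3 ^ 2 * r ^ 8 + ((288 : ℝ)/5) * Real.sqrt 2 ^ 2 * Real.sqrt 3 ^ 4 * r ^ 8 + ((5436 : ℝ)/5) * Real.sqrt 3 * r ^ 9 + ((20808 : ℝ)/35) * Real.sqrt 3 ^ 3 * r ^ 9 + ((1152 : ℝ)/7) * Real.sqrt 2 ^ 2 * Real.sqrt 3 ^ 3 * r ^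 9 + ((163134 : ℝ)/175) * Real.sqrt 3 ^ 2 * r ^ 10 + ((1728 : ℝ)/35) * Real.sqrt 3 ^ 4 * r ^ 10 + ((19827 : ℝ)/175) * Real.sqrt 2 ^ 2 * Real.sqrt 3 ^ 2 * r ^ 10 + ((864 : ℝ)/35) * Real.sqrt 2 ^ 2 * Real.sqrt 3 ^ 4 * r ^ 10 + ((80172 : ℝ)/175) * Real.sqrt 3 * r ^ 11 + ((37008 : ℝ)/175) * Real.sqrt 3 ^ 3 * r ^ 11 + ((10854 : ℝ)/175) * Real.sqrt 2 ^ 2 * Real.sqrt 3 ^ 3 * r ^ 11 + ((50256 : ℝ)/175) * Real.sqrt 3 ^ 2 * r ^ 12 + ((2214 : ℝ)/175) * Real.sqrt 3 ^ 4 * r ^ 12 + ((6696 : ℝ)/175) * Real.sqrt 2 ^ 2 * Real.sqrt 3 ^ 2 * r ^ 12 + ((1107 : ℝ)/175) * Real.sqrt 2 ^ 2 * Real.sqrt 3 ^ 4 * r ^ 12 + ((21942 : ℝ)/175) * Real.sqrt 3 * r ^ 13 + ((8208 : ℝ)/175) * Real.sqrt 3 ^ 3 * r ^ 13 + ((2538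 : ℝ)/175) * Real.sqrt 2 ^ 2 * Real.sqrt 3 ^ 3 * r ^ 13 + ((69336 : ℝ)/1225) * Real.sqrt 3 ^ 2 * r ^ 14 + ((324 : ℝ)/175) * Real.sqrt 3 ^ 4 * r ^ 14 + ((10098 : ℝ)/1225) * Real.sqrt 2 ^ 2 * Real.sqrt 3 ^ 2 * r ^ 14 + ((162 : ℝ)/175) * Real.sqrt 2 ^ 2 * Real.sqrt 3 ^ 4 * r ^ 14 + ((27378 : ℝ)/1225) * Real.sqrt 3 * r ^ 15 + ((7506 : ℝ)/1225) * Real.sqrt 3 ^ 3 * r ^ 15 + ((486 : ℝ)/245) * Real.sqrt 2 ^ 2 * Real.sqrt 3 ^ 3 * r ^ 15 + ((8208 : ℝ)/1225) * Real.sqrt 3 ^ 2 * r ^ 16 + ((162 : ℝ)/1225) * Real.sqrt 3 ^ 4 * r ^ 16 + ((1296 : ℝ)/1225) * Real.sqrt 2 ^ 2 * Real.sqrt 3 ^ 2 * r ^ 16 + ((81 : ℝ)/1225) * Real.sqrt 2 ^ 2 * Real.sqrt 3 ^ 4 * r ^ 16 + ((594 : ℝ)/245) * Real.sqrt 3 *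 r ^ 17 + ((486 : ℝ)/1225) * Real.sqrt 3 ^ 3 * r ^ 17 + ((162 : ℝ)/1225) * Real.sqrt 2 ^ 2 * Real.sqrt 3 ^ 3 * r ^ 17 + ((486 : ℝ)/1225) * Real.sqrt 3 ^ 2 * r ^ 18 + ((81 : ℝ)/1225) * Real.sqrt 2 ^ 2 * Real.sqrt 3 ^ 2 * r ^ 18 + ((162 : ℝ)/1225) * Real.sqrt 3 * r ^ 19) * sqrt2_sq + ((576 : ℝ) * r ^ 2 + (576 : ℝ) * Real.sqrt 3 * r ^ 3 + (3600 : ℝ) * r ^ 4 + (144 : ℝ) * Real.sqrt 3 ^ 2 * r ^ 4 + (1728 : ℝ) * Real.sqrt 3 * r ^ 5 + ((31104 : ℝ)/5) * r ^ 6 + (288 : ℝ) * Real.sqrt 3 ^ 2 * r ^ 6 + ((9936 : ℝ)/5) * Real.sqrt 3 * r ^ 7 + ((35856 : ℝ)/7) * r ^ 8 + ((1152 : ℝ)/5) * Real.sqrt 3 ^ 2 * r ^ 8 + ((41616 : ℝ)/35) * Real.sqrt 3 * r ^ 9 + ((424548 : ℝ)/175) * r ^ 10 + ((3456 : ℝ)/35)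 * Real.sqrt 3 ^ 2 * r ^ 10 + ((74016 : ℝ)/175) * Real.sqrt 3 * r ^ 11 + ((126036 : ℝ)/175) * r ^ 12 + ((4428 : ℝ)/175) * Real.sqrt 3 ^ 2 * r ^ 12 + ((16416 : ℝ)/175) * Real.sqrt 3 * r ^ 13 + ((166896 : ℝ)/1225) * r ^ 14 + ((648 : ℝ)/175) * Real.sqrt 3 ^ 2 * r ^ 14 + ((15012 : ℝ)/1225) * Real.sqrt 3 * r ^ 15 + ((108 : ℝ)/7) * r ^ 16 + ((324 : ℝ)/1225) * Real.sqrt 3 ^ 2 * r ^ 16 + ((972 : ℝ)/1225) * Real.sqrt 3 * r ^ 17 + ((1053 : ℝ)/1225) * r ^ 18) * sqrt3_sq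

lemma key_id (r : ℝ) :
    3 / 2 * N0E r - ApolyE r * D0sqP r ^ 2 = r ^ 9 * Tpoly r := by
  unfold N0E ApolyE D0sqP Tpoly Spoly Smoly Ppoly P1poly P2poly P3poly
  linear_combination ((-9072 : ℝ) * Real.sqrt 3 ^ 2 * r ^ 2 + (-38556 : ℝ) * Real.sqrt 3 * r ^ 3 + (11151 : ℝ) * Real.sqrt 3 ^ 3 * r ^ 3 + (6426 : ℝ) * Real.sqrt 2 ^ 2 * Real.sqrt 3 ^ 3 * r ^ 3 + (283500 : ℝ) * Real.sqrt 3 ^ 2 * r ^ 4 + (74088 : ℝ) * Real.sqrt 3 ^ 4 * r ^ 4 + (37044 : ℝ) * Real.sqrt 2 ^ 2 * Real.sqrt 3 ^ 4 * r ^ 4 + (1127034 : ℝ) * Real.sqrt 3 * r ^ 5 + (1249605 : ℝ) * Real.sqrt 3 ^ 3 * r ^ 5 + (226233 : ℝ) * Real.sqrt 2 ^ 2 * Real.sqrt 3 ^ 3 * r ^ 5 + ((33473484 : ℝ)/5) * Real.sqrt 3 ^ 2 * r ^ 6 + (626136 : ℝ) * Real.sqrt 3 ^ 4 * r ^ 6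 + (313068 : ℝ) * Real.sqrt 2 ^ 2 * Real.sqrt 3 ^ 4 * r ^ 6 + ((56216808 : ℝ)/5) * Real.sqrt 3 * r ^ 7 + ((68770017 : ℝ)/10) * Real.sqrt 3 ^ 3 * r ^ 7 + ((5060952 : ℝ)/5) * Real.sqrt 2 ^ 2 * Real.sqrt 3 ^ 3 * r ^ 7 + (25617636 : ℝ) * Real.sqrt 3 ^ 2 * r ^ 8 + ((8954706 : ℝ)/5) * Real.sqrt 3 ^ 4 * r ^ 8 + ((4477353 : ℝ)/5) * Real.sqrt 2 ^ 2 * Real.sqrt 3 ^ 4 * r ^ 8 + ((148379769 : ℝ)/5) * Real.sqrt 3 * r ^ 9 + ((151101909 : ℝ)/10) * Real.sqrt 3 ^ 3 * r ^ 9 + ((4073247 : ℝ)/2) * Real.sqrt 2 ^ 2 * Real.sqrt 3 ^ 3 * r ^ 9 + ((1094306058 : ℝ)/25) * Real.sqrt 3 ^ 2 * r ^ 10 + ((13486914 : ℝ)/5) * Real.sqrt 3 ^ 4 * r ^ 10 + ((6743457 : ℝ)/5) * Real.sqrt 2 ^ 2 * Real.sqrt 3 ^ 4 * r ^ 10 +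 ((13675391757 : ℝ)/350) * Real.sqrt 3 * r ^ 11 + ((736881291 : ℝ)/40) * Real.sqrt 3 ^ 3 * r ^ 11 + ((59572773 : ℝ)/25) * Real.sqrt 2 ^ 2 * Real.sqrt 3 ^ 3 * r ^ 11 + ((15186230559 : ℝ)/350) * Real.sqrt 3 ^ 2 * r ^ 12 + ((63087099 : ℝ)/25) * Real.sqrt 3 ^ 4 * r ^ 12 + ((63087099 : ℝ)/50) * Real.sqrt 2 ^ 2 * Real.sqrt 3 ^ 4 * r ^ 12 + ((11009555937 : ℝ)/350) * Real.sqrt 3 * r ^ 13 + ((501685929 : ℝ)/35) * Real.sqrt 3 ^ 3 * r ^ 13 + ((1272667743 : ℝ)/700) * Real.sqrt 2 ^ 2 * Real.sqrt 3 ^ 3 * r ^ 13 + ((9872239653 : ℝ)/350) * Real.sqrt 3 ^ 2 * r ^ 14 + ((279172563 : ℝ)/175) * Real.sqrt 3 ^ 4 * r ^ 14 + ((279172563 : ℝ)/350) * Real.sqrt 2 ^ 2 * Real.sqrt 3 ^ 4 * r ^ 14 + ((24001518321 : ℝ)/1400) * Real.sqrt 3 * r ^ 15 + ((53730743553 : ℝ)/7000)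 * Real.sqrt 3 ^ 3 * r ^ 15 + ((240859683 : ℝ)/250) * Real.sqrt 2 ^ 2 * Real.sqrt 3 ^ 3 * r ^ 15 + ((45031973787 : ℝ)/3500) * Real.sqrt 3 ^ 2 * r ^ 16 + ((1250759943 : ℝ)/1750) * Real.sqrt 3 ^ 4 * r ^ 16 + ((1250759943 : ℝ)/3500) * Real.sqrt 2 ^ 2 * Real.sqrt 3 ^ 4 * r ^ 16 + ((26767248579 : ℝ)/4000) * Real.sqrt 3 * r ^ 17 + ((20661210513 : ℝ)/7000) * Real.sqrt 3 ^ 3 * r ^ 17 + ((2570103351 : ℝ)/7000) * Real.sqrt 2 ^ 2 * Real.sqrt 3 ^ 3 * r ^ 17 + ((83759844501 : ℝ)/19600) * Real.sqrt 3 ^ 2 * r ^ 18 + ((406782459 : ℝ)/1750) * Real.sqrt 3 ^ 4 * r ^ 18 + ((406782459 : ℝ)/3500) * Real.sqrt 2 ^ 2 * Real.sqrt 3 ^ 4 * r ^ 18 + ((151083718371 : ℝ)/78400) * Real.sqrt 3 * r ^ 19 + ((162950283981 : ℝ)/196000) * Real.sqrt 3 ^ 3 * r ^ 19 + ((4999018113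 : ℝ)/49000) * Real.sqrt 2 ^ 2 * Real.sqrt 3 ^ 3 * r ^ 19 + ((102936365163 : ℝ)/98000) * Real.sqrt 3 ^ 2 * r ^ 20 + ((1350313659 : ℝ)/24500) * Real.sqrt 3 ^ 4 * r ^ 20 + ((1350313659 : ℝ)/49000) * Real.sqrt 2 ^ 2 * Real.sqrt 3 ^ 4 * r ^ 20 + ((81122747481 : ℝ)/196000) * Real.sqrt 3 * r ^ 21 + ((16835902407 : ℝ)/98000) * Real.sqrt 3 ^ 3 * r ^ 21 + ((1007602173 : ℝ)/49000) * Real.sqrt 2 ^ 2 * Real.sqrt 3 ^ 3 * r ^ 21 + ((74797047783 : ℝ)/392000) * Real.sqrt 3 ^ 2 * r ^ 22 + ((229806153 : ℝ)/24500) * Real.sqrt 3 ^ 4 * r ^ 22 + ((229806153 : ℝ)/49000) * Real.sqrt 2 ^ 2 * Real.sqrt 3 ^ 4 * r ^ 22 + ((7378925607 : ℝ)/112000) * Real.sqrt 3 * r ^ 23 + ((1002567213 : ℝ)/39200) * Real.sqrt 3 ^ 3 * r ^ 23 + ((143265267 : ℝ)/49000) * Real.sqrt 2 ^ 2 * Real.sqrt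 3 ^ 3 * r ^ 23 + ((1405063179 : ℝ)/56000) * Real.sqrt 3 ^ 2 * r ^ 24 + ((26837001 : ℝ)/24500) * Real.sqrt 3 ^ 4 * r ^ 24 + ((26837001 : ℝ)/49000) * Real.sqrt 2 ^ 2 * Real.sqrt 3 ^ 4 * r ^ 24 + ((5929392213 : ℝ)/784000) * Real.sqrt 3 * r ^ 25 + ((112176576 : ℝ)/42875) * Real.sqrt 3 ^ 3 * r ^ 25 + ((942111 : ℝ)/3430) * Real.sqrt 2 ^ 2 * Real.sqrt 3 ^ 3 * r ^ 25 + ((12457861317 : ℝ)/5488000) * Real.sqrt 3 ^ 2 * r ^ 26 + ((13605651 : ℝ)/171500) * Real.sqrt 3 ^ 4 * r ^ 26 + ((13605651 : ℝ)/343000) * Real.sqrt 2 ^ 2 * Real.sqrt 3 ^ 4 * r ^ 26 + ((50460651 : ℝ)/85750) * Real.sqrt 3 * r ^ 27 + ((56797119 : ℝ)/343000) * Real.sqrt 3 ^ 3 * r ^ 27 + ((180063 : ℝ)/12250) * Real.sqrt 2 ^ 2 * Real.sqrt 3 ^ 3 * r ^ 27 + ((693562581 : ℝ)/5488000) * Real.sqrt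 3 ^ 2 * r ^ 28 + ((230607 : ℝ)/85750) * Real.sqrt 3 ^ 4 * r ^ 28 + ((230607 : ℝ)/171500) * Real.sqrt 2 ^ 2 * Real.sqrt 3 ^ 4 * r ^ 28 + ((5294727 : ℝ)/196000) * Real.sqrt 3 * r ^ 29 + ((1659933 : ℝ)/343000) * Real.sqrt 3 ^ 3 * r ^ 29 + ((24057 : ℝ)/85750) * Real.sqrt 2 ^ 2 * Real.sqrt 3 ^ 3 * r ^ 29 + ((8675829 : ℝ)/2744000) * Real.sqrt 3 ^ 2 * r ^ 30 + ((649539 : ℝ)/1372000) * Real.sqrt 3 * r ^ 31) * sqrt2_sq + ((-18144 : ℝ) * r ^ 2 + (22302 : ℝ) * Real.sqrt 3 * r ^ 3 + (1011528 : ℝ) * r ^ 4 + (148176 : ℝ) * Real.sqrt 3 ^ 2 * r ^ 4 + (2499210 : ℝ) * Real.sqrt 3 * r ^ 5 + ((64794168 : ℝ)/5) * r ^ 6 + (1252272 : ℝ) * Real.sqrt 3 ^ 2 * r ^ 6 + ((107552817 : ℝ)/5) * Real.sqrt 3 * r ^ 7 + ((338144436 : ℝ)/5) * r ^ 8 + ((17909412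 : ℝ)/5) * Real.sqrt 3 ^ 2 * r ^ 8 + ((382528629 : ℝ)/5) * Real.sqrt 3 * r ^ 9 + ((4653030096 : ℝ)/25) * r ^ 10 + ((26973828 : ℝ)/5) * Real.sqrt 3 ^ 2 * r ^ 10 + ((3188498571 : ℝ)/20) * Real.sqrt 3 * r ^ 11 + ((53524366407 : ℝ)/175) * r ^ 12 + ((126174198 : ℝ)/25) * Real.sqrt 3 ^ 2 * r ^ 12 + ((7745716278 : ℝ)/35) * Real.sqrt 3 * r ^ 13 + ((54195430887 : ℝ)/175) * r ^ 14 + ((558345126 : ℝ)/175) * Real.sqrt 3 ^ 2 * r ^ 14 + ((763668986553 : ℝ)/3500) * Real.sqrt 3 * r ^ 15 + ((1258056873 : ℝ)/7) * r ^ 16 + ((1250759943 : ℝ)/875) * Real.sqrt 3 ^ 2 * r ^ 16 + ((556435269333 : ℝ)/3500) * Real.sqrt 3 * r ^ 17 + ((38335835871 : ℝ)/1400) * r ^ 18 + ((406782459 : ℝ)/875) * Real.sqrt 3 ^ 2 * r ^ 18 + ((8624012580801 : ℝ)/98000) * Real.sqrt 3 * r ^ 19 + ((-309428630253 : ℝ)/6125)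 * r ^ 20 + ((1350313659 : ℝ)/12250) * Real.sqrt 3 ^ 2 * r ^ 20 + ((1848057238197 : ℝ)/49000) * Real.sqrt 3 * r ^ 21 + ((-53438955453423 : ℝ)/980000) * r ^ 22 + ((229806153 : ℝ)/12250) * Real.sqrt 3 ^ 2 * r ^ 22 + ((77555340117 : ℝ)/6125) * Real.sqrt 3 * r ^ 23 + ((-15470663037651 : ℝ)/490000) * r ^ 24 + ((26837001 : ℝ)/12250) * Real.sqrt 3 ^ 2 * r ^ 24 + ((11472347463597 : ℝ)/3430000) * Real.sqrt 3 * r ^ 25 + ((-872191910598831 : ℝ)/68600000) * r ^ 26 + ((13605651 : ℝ)/85750) * Real.sqrt 3 ^ 2 * r ^ 26 + ((9505013360139 : ℝ)/13720000) * Real.sqrt 3 * r ^ 27 + ((-262159794544743 : ℝ)/68600000) * r ^ 28 + ((230607 : ℝ)/42875) * Real.sqrt 3 ^ 2 * r ^ 28 + ((152346517101 : ℝ)/1372000) * Real.sqrt 3 * r ^ 29 + ((-24126191152407 : ℝ)/27440000) * r ^ 30 + ((3749457609 : ℝ)/280000) * Real.sqrt 3 * r ^ 31 + ((-21334286794869 :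 ℝ)/137200000) * r ^ 32 + ((2251259019 : ℝ)/1960000) * Real.sqrt 3 * r ^ 33 + ((-40148469489033 : ℝ)/1920800000) * r ^ 34 + ((3374284743 : ℝ)/54880000) * Real.sqrt 3 * r ^ 35 + ((-249056306577 : ℝ)/120050000) * r ^ 36 + ((6537591 : ℝ)/5488000) * Real.sqrt 3 * r ^ 37 + ((-6901080201 : ℝ)/48020000) * r ^ 38 + ((-3494097 : ℝ)/54880000) * Real.sqrt 3 * r ^ 39 + ((-1702000431 : ℝ)/274400000) * r ^ 40 + ((-6561 : ℝ)/1960000) * Real.sqrt 3 * r ^ 41 + ((-8579601 : ℝ)/68600000) * r ^ 42) * sqrt3_sq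

lemma nd_id (r : ℝ) : NfunE r = N0E r + aE r * UnE r + bE r * VnE r := by
  have e2 : Real.exp (2 * Real.sqrt 6 * r) = Real.exp (Real.sqrt 6 * r) ^ 2 := by
    rw [show 2 * Real.sqrt 6 * r = Real.sqrt 6 * r + Real.sqrt 6 * r by ring, Real.exp_add]
    ring
  have e2' : Real.exp (-(2 * Real.sqrt 6 * r)) = Real.exp (-(Real.sqrt 6 * r)) ^ 2 := by
    rw [show -(2 * Real.sqrt 6 * r) = -(Real.sqrt 6 * r) + -(Real.sqrt 6 * r) by ring,
      Real.exp_add]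
    ring
  have e3 : Real.exp (3 * Real.sqrt 6 * r) = Real.exp (Real.sqrt 6 * r) ^ 3 := by
    rw [show 3 * Real.sqrt 6 * r = Real.sqrt 6 * r + (Real.sqrt 6 * r + Real.sqrt 6 * r)
      by ring, Real.exp_add, Real.exp_add]
    ring
  have e3' : Real.exp (-(3 * Real.sqrt 6 * r)) = Real.exp (-(Real.sqrt 6 * r)) ^ 3 := by
    rw [show -(3 * Real.sqrt 6 * r) = -(Real.sqrt 6 * r) + (-(Real.sqrt 6 * r)
      + -(Real.sqrt 6 * r)) by ring, Real.exp_add, Real.exp_add]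
    ring
  unfold NfunE N0E aE bE UnE VnE
  rw [e2, e2', e3, e3']
  ring

lemma dd_id (r : ℝ) :
    dfunE r = D0E r + aE r * (Qpoly r * (4 + 3 * Real.sqrt 2))
      + bE r * (Qpoly r * (4 - 3 * Real.sqrt 2)) := by
  unfold dfunE D0E aE bE
  ring

lemma hpt (r : ℝ) :
    3 / 2 * NfunE r - ApolyE r * dfunE r ^ 4
      = r ^ 9 * Tpoly r + aE r * U1E r + bE r * V1E r := by
  unfold U1E V1E KE
  linear_combination key_id r + 3 / 2 * nd_id r
    - ApolyE r * (dfunE r ^ 3 + dfunE r ^ 2 * D0E r + dfunE r * D0E r ^ 2 + D0E r ^ 3)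
        * dd_id r
    - ApolyE r * (D0E r ^ 2 + D0sqP r) * D0sq_id r

lemma sqrt6_le : Real.sqrt 6 ≤ 3 := by
  nlinarith [Real.sq_sqrt (show (0:ℝ) ≤ 6 by norm_num), Real.sqrt_nonneg 6]

lemma sqrt6_pos : 0 < Real.sqrt 6 := Real.sqrt_pos.mpr (by norm_num)

lemma aE_bound {r : ℝ} (hr : |r| ≤ 1/3) : |aE r| ≤ |r| ^ 9 := by
  have hx : |Real.sqrt 6 * r| ≤ 1 := by
    rw [abs_mul, abs_of_nonneg (Real.sqrt_nonneg 6)]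
    nlinarith [sqrt6_le, sqrt6_pos, abs_nonneg r]
  have hb := Real.exp_bound hx (by norm_num : 0 < 9)
  rw [← Spoly_sum r] at hb
  have h9 : |Real.sqrt 6 * r| ^ 9 ≤ 19683 * |r| ^ 9 := by
    have h1 : |Real.sqrt 6 * r| ≤ 3 * |r| := by
      rw [abs_mul, abs_of_nonneg (Real.sqrt_nonneg 6)]
      nlinarith [sqrt6_le, abs_nonneg r]
    calc |Real.sqrt 6 * r| ^ 9 ≤ (3 * |r|) ^ 9 :=
          pow_le_pow_left₀ (abs_nonneg _) h1 9
      _ = 19683 * |r| ^ 9 := by ring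
  have hc : ((9:ℕ).succ : ℝ) / ((9:ℕ).factorial * 9) ≤ 1 / 19683 := by
    norm_num [Nat.factorial]
  calc |aE r| = |Real.exp (Real.sqrt 6 * r) - Spoly r| := rfl
    _ ≤ |Real.sqrt 6 * r| ^ 9 * (((9:ℕ).succ : ℝ) / ((9:ℕ).factorial * 9)) := hb
    _ ≤ (19683 * |r| ^ 9) * (1 / 19683) := by
        apply mul_le_mul h9 hc (by positivity) (by positivity)
    _ = |r| ^ 9 := by ring

lemma bE_bound {r : ℝ} (hr : |r| ≤ 1/3) : |bE r| ≤ |r| ^ 9 := by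
  have hx : |(-(Real.sqrt 6 * r))| ≤ 1 := by
    rw [abs_neg, abs_mul, abs_of_nonneg (Real.sqrt_nonneg 6)]
    nlinarith [sqrt6_le, sqrt6_pos, abs_nonneg r]
  have hb := Real.exp_bound hx (by norm_num : 0 < 9)
  rw [← Smoly_sum r] at hb
  have h9 : |(-(Real.sqrt 6 * r))| ^ 9 ≤ 19683 * |r| ^ 9 := by
    have h1 : |(-(Real.sqrt 6 * r))| ≤ 3 * |r| := by
      rw [abs_neg, abs_mul, abs_of_nonneg (Real.sqrt_nonneg 6)]
      nlinarith [sqrt6_le, abs_nonneg r]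
    calc |(-(Real.sqrt 6 * r))| ^ 9 ≤ (3 * |r|) ^ 9 :=
          pow_le_pow_left₀ (abs_nonneg _) h1 9
      _ = 19683 * |r| ^ 9 := by ring
  have hc : ((9:ℕ).succ : ℝ) / ((9:ℕ).factorial * 9) ≤ 1 / 19683 := by
    norm_num [Nat.factorial]
  calc |bE r| = |Real.exp (-(Real.sqrt 6 * r)) - Smoly r| := rfl
    _ ≤ |(-(Real.sqrt 6 * r))| ^ 9 * (((9:ℕ).succ : ℝ) / ((9:ℕ).factorial * 9)) := hb
    _ ≤ (19683 * |r| ^ 9) * (1 / 19683) := by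
        apply mul_le_mul h9 hc (by positivity) (by positivity)
    _ = |r| ^ 9 := by ring

lemma sqrt2_sqrt6 : Real.sqrt 2 * Real.sqrt 6 = 2 * Real.sqrt 3 := by
  rw [sqrt6_eq, show Real.sqrt 2 * (Real.sqrt 2 * Real.sqrt 3)
      = Real.sqrt 2 ^ 2 * Real.sqrt 3 by ring, sqrt2_sq]

lemma dfun_lower {r : ℝ} (hr : 0 < r) : 12 * Real.sqrt 3 * r ≤ dfunE r := by
  set x := Real.sqrt 6 * r with hxdef
  have hxpos : 0 < x := mul_pos sqrt6_pos hr
  have hexp1 := Real.add_one_le_exp x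
  have hexp2 := Real.add_one_le_exp (-x)
  have hsinh : x < Real.sinh x := Real.self_lt_sinh_iff.mpr hxpos
  rw [Real.sinh_eq] at hsinh
  have hs2 : (0:ℝ) < Real.sqrt 2 := Real.sqrt_pos.mpr (by norm_num)
  have hs3 : (0:ℝ) ≤ Real.sqrt 3 := Real.sqrt_nonneg 3
  have hB : 12 + 12 * Real.sqrt 3 * r ≤ 4 + (4 + 3 * Real.sqrt 2) * Real.exp x
      + (4 - 3 * Real.sqrt 2) * Real.exp (-x) := by
    have h1 : 2 ≤ Real.exp x + Real.exp (-x) := by linarith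
    have h2 : 2 * x ≤ Real.exp x - Real.exp (-x) := by linarith
    have h3 : Real.sqrt 2 * (2 * x) ≤ Real.sqrt 2 * (Real.exp x - Real.exp (-x)) :=
      mul_le_mul_of_nonneg_left h2 hs2.le
    have h4 : Real.sqrt 2 * (2 * x) = 2 * (2 * Real.sqrt 3) * r := by
      rw [hxdef]
      calc Real.sqrt 2 * (2 * (Real.sqrt 6 * r)) = 2 * (Real.sqrt 2 * Real.sqrt 6) * r := by
            ring
        _ = 2 * (2 * Real.sqrt 3) * r := by rw [sqrt2_sqrt6]
    nlinarith [h1, h3, h4]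
  have hQ : 1 ≤ Qpoly r := by
    unfold Qpoly
    nlinarith [hs3, hr]
  have hBpos : (0:ℝ) ≤ 4 + (4 + 3 * Real.sqrt 2) * Real.exp x
      + (4 - 3 * Real.sqrt 2) * Real.exp (-x) := by
    nlinarith [hB, hs3, hr]
  unfold dfunE
  rw [← hxdef]
  nlinarith [mul_le_mul_of_nonneg_right hQ hBpos, hB]

/-- E[e^{-σV}] → 1 as σ → 0⁺ and
E[e^{-σV}] = 1 - (665√3/1024)σ^{1/4} + (49/(768√3))σ^{3/4} + (63/80)σ + O(σ^{5/4}). -/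
theorem stmt_9 :
    Tendsto Elaplace (nhdsWithin 0 (Set.Ioi 0)) (nhds 1) ∧
    (fun σ : ℝ => Elaplace σ -
        (1 - 665 * Real.sqrt 3 / 1024 * σ ^ ((1 : ℝ) / 4)
          + 49 / (768 * Real.sqrt 3) * σ ^ ((3 : ℝ) / 4) + 63 / 80 * σ))
      =O[nhdsWithin 0 (Set.Ioi 0)] fun σ : ℝ => σ ^ ((5 : ℝ) / 4) := by
  have h3sq : Real.sqrt 3 * Real.sqrt 3 = 3 := Real.mul_self_sqrt (by norm_num)
  have h3pos : (0:ℝ) < Real.sqrt 3 := Real.sqrt_pos.mpr (by norm_num)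
  set l : Filter ℝ := nhdsWithin 0 (Set.Ioi 0) with hl
  have hmemIoo : Set.Ioo (0:ℝ) (1/3) ∈ l := Ioo_mem_nhdsGT_of_mem (by norm_num)
  -- big-O of aE, bE
  have ha : aE =O[l] (fun r : ℝ => r ^ 9) := by
    rw [isBigO_iff]
    refine ⟨1, ?_⟩
    filter_upwards [hmemIoo] with r hrm
    have : |r| ≤ 1/3 := by
      rw [abs_of_pos hrm.1]; exact hrm.2.le
    simpa [abs_pow] using aE_bound this
  have hb : bE =O[l] (fun r : ℝ => r ^ 9) := by
    rw [isBigO_iff]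
    refine ⟨1, ?_⟩
    filter_upwards [hmemIoo] with r hrm
    have : |r| ≤ 1/3 := by
      rw [abs_of_pos hrm.1]; exact hrm.2.le
    simpa [abs_pow] using bE_bound this
  -- continuity / O(1)
  have hcontT : Continuous Tpoly := by unfold Tpoly; fun_prop
  have hcontU : Continuous U1E := by
    unfold U1E UnE KE dfunE D0E ApolyE Qpoly Spoly Smoly P1poly P2poly P3poly
    fun_prop
  have hcontV : Continuous V1E := by
    unfold V1E VnE KE dfunE D0E ApolyE Qpoly Spoly Smoly P1poly P2poly P3poly
    fun_prop
  have hTO : Tpoly =O[l] (fun _ : ℝ => (1:ℝ)) :=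
    ((hcontT.tendsto 0).mono_left nhdsWithin_le_nhds).isBigO_one ℝ
  have hUO : U1E =O[l] (fun _ : ℝ => (1:ℝ)) :=
    ((hcontU.tendsto 0).mono_left nhdsWithin_le_nhds).isBigO_one ℝ
  have hVO : V1E =O[l] (fun _ : ℝ => (1:ℝ)) :=
    ((hcontV.tendsto 0).mono_left nhdsWithin_le_nhds).isBigO_one ℝ
  -- numerator big-O
  have hG : (fun r : ℝ => 3 / 2 * NfunE r - ApolyE r * dfunE r ^ 4) =O[l]
      (fun r : ℝ => r ^ 9) := by
    have h1 : (fun r : ℝ => r ^ 9 * Tpoly r) =O[l] (fun r : ℝ => r ^ 9) := by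
      simpa using (isBigO_refl (fun r : ℝ => r ^ 9) l).mul hTO
    have h2 : (fun r : ℝ => aE r * U1E r) =O[l] (fun r : ℝ => r ^ 9) := by
      simpa using ha.mul hUO
    have h3 : (fun r : ℝ => bE r * V1E r) =O[l] (fun r : ℝ => r ^ 9) := by
      simpa using hb.mul hVO
    have hsum := (h1.add h2).add h3
    exact hsum.congr_left fun r => (hpt r).symm
  -- main r-space bound
  obtain ⟨C, hC⟩ := isBigO_iff.mp hG
  have hmain_r : (fun r : ℝ => 3 / 2 * NfunE r / dfunE r ^ 4 - ApolyE r) =O[l]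
      (fun r : ℝ => r ^ 5) := by
    rw [isBigO_iff]
    refine ⟨C / 186624, ?_⟩
    filter_upwards [hC, hmemIoo] with r hbd hrm
    have hr : 0 < r := hrm.1
    have hd : 12 * Real.sqrt 3 * r ≤ dfunE r := dfun_lower hr
    have hdpos : 0 < dfunE r := lt_of_lt_of_le (by positivity) hd
    have hd4 : 186624 * r ^ 4 ≤ dfunE r ^ 4 := by
      have h1 : (12 * Real.sqrt 3 * r) ^ 4 ≤ dfunE r ^ 4 :=
        pow_le_pow_left₀ (by positivity) hd 4
      have h2 : (12 * Real.sqrt 3 * r) ^ 4 = 186624 * r ^ 4 := by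
        have : (Real.sqrt 3) ^ 4 = 9 := by
          rw [show (4:ℕ) = 2 * 2 by norm_num, pow_mul, sqrt3_sq]; norm_num
        rw [mul_pow, mul_pow, this]; ring
      linarith
    have heq : 3 / 2 * NfunE r / dfunE r ^ 4 - ApolyE r
        = (3 / 2 * NfunE r - ApolyE r * dfunE r ^ 4) / dfunE r ^ 4 := by
      field_simp
    rw [heq, norm_div]
    have hden : (0:ℝ) < 186624 * r ^ 4 := by positivity
    have hdnorm : ‖dfunE r ^ 4‖ = dfunE r ^ 4 := by
      rw [Real.norm_eq_abs, abs_of_pos (by positivity)]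
    rw [hdnorm]
    have hCpos : 0 ≤ C * ‖r ^ 9‖ := le_trans (norm_nonneg _) hbd
    calc ‖3 / 2 * NfunE r - ApolyE r * dfunE r ^ 4‖ / dfunE r ^ 4
        ≤ (C * ‖r ^ 9‖) / (186624 * r ^ 4) := by
          apply div_le_div₀ hCpos hbd hden (by linarith)
      _ = C / 186624 * ‖r ^ 5‖ := by
          rw [Real.norm_eq_abs, Real.norm_eq_abs, abs_of_pos (by positivity : (0:ℝ) < r ^ 9),
            abs_of_pos (by positivity : (0:ℝ) < r ^ 5)]
          field_simp
  -- composition with σ ↦ σ^(1/4)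
  have htends : Tendsto (fun σ : ℝ => σ ^ ((1:ℝ)/4)) l l := by
    rw [hl, tendsto_nhdsWithin_iff]
    constructor
    · have hc : ContinuousAt (fun σ : ℝ => σ ^ ((1:ℝ)/4)) 0 :=
        Real.continuousAt_rpow_const 0 _ (Or.inr (by norm_num))
      have h0 : (0:ℝ) ^ ((1:ℝ)/4) = 0 := Real.zero_rpow (by norm_num)
      have := hc.tendsto
      rw [h0] at this
      exact this.mono_left nhdsWithin_le_nhds
    · filter_upwards [self_mem_nhdsWithin] with σ hσ
      exact Real.rpow_pos_of_pos hσ _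
  have hcomp := hmain_r.comp_tendsto htends
  have hIoi : ∀ᶠ σ : ℝ in l, σ ∈ Set.Ioi (0:ℝ) := self_mem_nhdsWithin
  have hpow3 : ∀ σ : ℝ, 0 < σ → (σ ^ ((1:ℝ)/4)) ^ (3:ℕ) = σ ^ ((3:ℝ)/4) := fun σ hσ => by
    rw [← Real.rpow_natCast (σ ^ ((1:ℝ)/4)) 3, ← Real.rpow_mul hσ.le]
    norm_num
  have hpow4 : ∀ σ : ℝ, 0 < σ → (σ ^ ((1:ℝ)/4)) ^ (4:ℕ) = σ := fun σ hσ => by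
    rw [← Real.rpow_natCast (σ ^ ((1:ℝ)/4)) 4, ← Real.rpow_mul hσ.le]
    norm_num
  have hpow5 : ∀ σ : ℝ, 0 < σ → (σ ^ ((1:ℝ)/4)) ^ (5:ℕ) = σ ^ ((5:ℝ)/4) := fun σ hσ => by
    rw [← Real.rpow_natCast (σ ^ ((1:ℝ)/4)) 5, ← Real.rpow_mul hσ.le]
    norm_num
  have hcoef : 49 / (768 * Real.sqrt 3) = 49 / 2304 * Real.sqrt 3 := by
    rw [div_eq_iff (by positivity)]
    nlinarith [h3sq]
  have hElap : ∀ σ : ℝ, Elaplace σ = 3 / 2 * NfunE (σ ^ ((1:ℝ)/4)) / dfunE (σ ^ ((1:ℝ)/4)) ^ 4 :=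
    fun σ => rfl
  have hAeq : ∀ σ : ℝ, 0 < σ → ApolyE (σ ^ ((1:ℝ)/4))
      = 1 - 665 * Real.sqrt 3 / 1024 * σ ^ ((1:ℝ)/4)
        + 49 / (768 * Real.sqrt 3) * σ ^ ((3:ℝ)/4) + 63 / 80 * σ := fun σ hσ => by
    unfold ApolyE
    rw [hcoef]
    linear_combination (49 / 2304 * Real.sqrt 3) * hpow3 σ hσ + (63 / 80) * hpow4 σ hσ
  have hbigO : (fun σ : ℝ => Elaplace σ -
      (1 - 665 * Real.sqrt 3 / 1024 * σ ^ ((1:ℝ)/4)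
        + 49 / (768 * Real.sqrt 3) * σ ^ ((3:ℝ)/4) + 63 / 80 * σ))
      =O[l] fun σ : ℝ => σ ^ ((5:ℝ)/4) := by
    apply hcomp.congr'
    · filter_upwards [hIoi] with σ hσ
      simp only [Function.comp]
      rw [← hElap σ, hAeq σ hσ]
    · filter_upwards [hIoi] with σ hσ
      simp only [Function.comp]
      exact hpow5 σ hσ
  refine ⟨?_, hbigO⟩
  -- Tendsto part
  have hrpowt : ∀ c : ℝ, 0 < c → Tendsto (fun σ : ℝ => σ ^ c) l (nhds 0) := by
    intro c hc
    have hcont : ContinuousAt (fun σ : ℝ => σ ^ c) 0 :=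
      Real.continuousAt_rpow_const 0 _ (Or.inr hc.le)
    have h0 : (0:ℝ) ^ c = 0 := Real.zero_rpow (ne_of_gt hc)
    have := hcont.tendsto
    rw [h0] at this
    exact this.mono_left nhdsWithin_le_nhds
  have hA1 : Tendsto (fun σ : ℝ => 1 - 665 * Real.sqrt 3 / 1024 * σ ^ ((1:ℝ)/4)
      + 49 / (768 * Real.sqrt 3) * σ ^ ((3:ℝ)/4) + 63 / 80 * σ) l (nhds 1) := by
    have t1 : Tendsto (fun σ : ℝ => 665 * Real.sqrt 3 / 1024 * σ ^ ((1:ℝ)/4)) l (nhds 0) := by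
      simpa using (hrpowt ((1:ℝ)/4) (by norm_num)).const_mul (665 * Real.sqrt 3 / 1024)
    have t3 : Tendsto (fun σ : ℝ => 49 / (768 * Real.sqrt 3) * σ ^ ((3:ℝ)/4)) l (nhds 0) := by
      simpa using (hrpowt ((3:ℝ)/4) (by norm_num)).const_mul (49 / (768 * Real.sqrt 3))
    have t4 : Tendsto (fun σ : ℝ => 63 / 80 * σ) l (nhds 0) := by
      have h : Tendsto (fun σ : ℝ => σ) l (nhds 0) :=
        tendsto_id.mono_left nhdsWithin_le_nhds
      simpa using h.const_mul (63/80 : ℝ)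
    have hc1 : Tendsto (fun _ : ℝ => (1:ℝ)) l (nhds 1) := tendsto_const_nhds
    have := ((hc1.sub t1).add t3).add t4
    simpa using this
  have h0' : Tendsto (fun σ : ℝ => Elaplace σ -
      (1 - 665 * Real.sqrt 3 / 1024 * σ ^ ((1:ℝ)/4)
        + 49 / (768 * Real.sqrt 3) * σ ^ ((3:ℝ)/4) + 63 / 80 * σ)) l (nhds 0) :=
    hbigO.trans_tendsto (hrpowt ((5:ℝ)/4) (by norm_num))
  have := h0'.add hA1
  simpa using this
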